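/- Let F be a field, q ∈ F, and m, s, t ≥ 1 natural numbers, with q + 1 ≠ 0 and Δ := q²(s−1)(t−1) − 1 ≠ 0 in F. Let D̂ be a symmetric m×m matrix over F with D̂(w_m, w_m) = 0 (w_m the last index of Fin m), let L̂ be an m×m matrix and x̂ : Fin m → F such that D̂·L̂ + I = 𝟙·x̂ᵀ and ∑_{u} L̂(u,v) = (1 − q)·x̂(v) for every v. Index I = Fin m ⊕ (Fin (s−1) ⊕ Fin t) and define the I×I matrix D by: D(inl i, inl j) = D̂(i,j); D(inl i, inr(inl b)) = D(inr(inl b), inl i) = (q+1) + q²·D̂(i, w_m); D(inl i, inr(inr c)) = D(inr(inr c), inl i) = 1 + q·D̂(i, w_m); D(inr(inl a), inr(inl b)) = q+1 if a ≠ b and 0 if a = b; D(inr(inl a), inr(inr c)) = D(inr(inr c), inr(inl a)) = 1; D(inr(inr c), inr(inr c')) = q+1 if c ≠ c' and 0 if c = c'. Define x : I → F by x(inl i) = x̂(i) for i ≠ w_m, x(inl w_m) = x̂(w_m) + (q(t−1)−1)/((q+1)Δ) − 1, x(inr (inl a)) = (q(t−1)−1)/((q+1)Δ), x(inr (inr c))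 = (q(s−1)−1)/((q+1)Δ). Define the I×I matrix L by: L(inl i, inl j) = L̂(i,j) − (q²/(q+1))·((t−1)/Δ − 1) when i = j = w_m and L(inl i, inl j) = L̂(i,j) otherwise; L(inl w_m, inr(inl b)) = L(inr(inl b), inl w_m) = −q²(t−1)/((q+1)Δ), and L(inl i, inr(inl b)) = L(inr(inl b), inl i) = 0 for i ≠ w_m; L(inl w_m, inr(inr c)) = L(inr(inr c), inl w_m) = q/((q+1)Δ), and L(inl i, inr(inr c)) = L(inr(inr c), inl i) = 0 for i ≠ w_m; L(inr(inl a), inr(inl b)) = −q²(t−1)/((q+1)Δ) + (1/(q+1) if a = b else 0); L(inr(inl a), inr(inr c)) = L(inr(inr c), inr(inl a)) = q/((q+1)Δ); L(inr(inr c), inr(inr c')) = −q²(s−1)/((q+1)Δ) + (1/(q+1) if c = c' else 0). Then D·L + I = 𝟙·xᵀ, i.e. for all u, v ∈ I: ∑_{w} D(u,w)·L(w,v) + (1 if u = v else 0) = x(v). -/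

import Mathlib

/-- The `q`-distance matrix of the graph obtained from a graph `H` with
`m` vertices (with `q`-distance matrix `D̂` and cut vertex `w_m`, playing the
role of an `X`-vertex of the new block) by attaching a leaf block `K_{s,t}`:
the index set is `Fin m ⊕ (Fin s' ⊕ Fin t')` where `Fin s'` indexes the new
`X`-vertices other than the cut vertex and `Fin t'` the new `Y`-vertices. -/
def extDMat (F : Type*) [Field F] (q : F) {m s' t' : ℕ}
    (Dh : Matrix (Fin m) (Fin m) F) (wm : Fin m) :
    Matrix (Fin m ⊕ (Fin s' ⊕ Fin t')) (Fin m ⊕ (Fin s' ⊕ Fin t')) F :=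
  Matrix.of fun u v =>
    match u, v with
    | Sum.inl i, Sum.inl j => Dh i j
    | Sum.inl i, Sum.inr (Sum.inl _) => (q + 1) + q ^ 2 * Dh i wm
    | Sum.inr (Sum.inl _), Sum.inl i => (q + 1) + q ^ 2 * Dh i wm
    | Sum.inl i, Sum.inr (Sum.inr _) => 1 + q * Dh i wm
    | Sum.inr (Sum.inr _), Sum.inl i => 1 + q * Dh i wm
    | Sum.inr (Sum.inl a), Sum.inr (Sum.inl b) => if a = b then 0 else q + 1
    | Sum.inr (Sum.inl _), Sum.inr (Sum.inr _) => 1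
    | Sum.inr (Sum.inr _), Sum.inr (Sum.inl _) => 1
    | Sum.inr (Sum.inr c), Sum.inr (Sum.inr c') => if c = c' then 0 else q + 1

/-- The extension of the special vector `x̂` of `H` to the enlarged graph. -/
def extXVec (F : Type*) [Field F] (q : F) (s t : ℕ) {m s' t' : ℕ}
    (xh : Fin m → F) (wm : Fin m) : Fin m ⊕ (Fin s' ⊕ Fin t') → F := fun u =>
  match u with
  | Sum.inl i =>
      if i = wm then
        xh wm + (q * ((t : F) - 1) - 1) /
          ((q + 1) * (q ^ 2 * ((s : F) - 1) * ((t : F) - 1) - 1)) - 1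
      else xh i
  | Sum.inr (Sum.inl _) =>
      (q * ((t : F) - 1) - 1) /
        ((q + 1) * (q ^ 2 * ((s : F) - 1) * ((t : F) - 1) - 1))
  | Sum.inr (Sum.inr _) =>
      (q * ((s : F) - 1) - 1) /
        ((q + 1) * (q ^ 2 * ((s : F) - 1) * ((t : F) - 1) - 1))

/-- The Laplacian-like matrix `ℒ` of the enlarged graph, written entrywise in
terms of the Laplacian-like matrix `L̂` of `H`.  Here `Δ = q²(s−1)(t−1) − 1`
with `s, t` cast into `F`. -/
def extLMat (F : Type*) [Field F] (q : F) (s t : ℕ) {m s' t' : ℕ}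
    (Lh : Matrix (Fin m) (Fin m) F) (wm : Fin m) :
    Matrix (Fin m ⊕ (Fin s' ⊕ Fin t')) (Fin m ⊕ (Fin s' ⊕ Fin t')) F :=
  let Δ : F := q ^ 2 * ((s : F) - 1) * ((t : F) - 1) - 1
  Matrix.of fun u v =>
    match u, v with
    | Sum.inl i, Sum.inl j =>
        if i = wm ∧ j = wm then
          Lh i j - (q ^ 2 / (q + 1)) * (((t : F) - 1) / Δ - 1)
        else Lh i j
    | Sum.inl i, Sum.inr (Sum.inl _) =>
        if i = wm then -q ^ 2 * ((t : F) - 1) / ((q + 1) * Δ) else 0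
    | Sum.inr (Sum.inl _), Sum.inl i =>
        if i = wm then -q ^ 2 * ((t : F) - 1) / ((q + 1) * Δ) else 0
    | Sum.inl i, Sum.inr (Sum.inr _) =>
        if i = wm then q / ((q + 1) * Δ) else 0
    | Sum.inr (Sum.inr _), Sum.inl i =>
        if i = wm then q / ((q + 1) * Δ) else 0
    | Sum.inr (Sum.inl a), Sum.inr (Sum.inl b) =>
        -q ^ 2 * ((t : F) - 1) / ((q + 1) * Δ) + (if a = b then 1 / (q + 1) else 0)
    | Sum.inr (Sum.inl _), Sum.inr (Sum.inr _) => q / ((q + 1) * Δ)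
    | Sum.inr (Sum.inr _), Sum.inr (Sum.inl _) => q / ((q + 1) * Δ)
    | Sum.inr (Sum.inr c), Sum.inr (Sum.inr c') =>
        -q ^ 2 * ((s : F) - 1) / ((q + 1) * Δ) + (if c = c' then 1 / (q + 1) else 0)

private lemma aux_ite_sub {F : Type*} [Field F] (P : Prop) [Decidable P] (X C : F) :
    (if P then X - C else X) = X - (if P then C else 0) := by split <;> ring

private lemma aux_ite_zero_flip {F : Type*} [Field F] (P : Prop) [Decidable P] (c : F) :
    (if P then (0:F) else c) = c - (if P then c else 0) := by split <;> ring

set_option maxHeartbeats 2000000 in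
theorem extDMat_mul_extLMat_add_one (F : Type*) [Field F] (q : F)
    (m s t : ℕ) (hm : 1 ≤ m) (hs : 1 ≤ s) (ht : 1 ≤ t)
    (hq : q + 1 ≠ 0)
    (hΔ : q ^ 2 * ((s : F) - 1) * ((t : F) - 1) - 1 ≠ 0)
    (Dh : Matrix (Fin m) (Fin m) F) (hsymm : Dh.IsSymm)
    (wm : Fin m) (hwm : (wm : ℕ) = m - 1) (hdiag : Dh wm wm = 0)
    (Lh : Matrix (Fin m) (Fin m) F) (xh : Fin m → F)
    (hDL : Dh * Lh + 1 = Matrix.of fun _ v => xh v)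
    (hcol : ∀ v, ∑ u, Lh u v = (1 - q) * xh v) :
    ∀ u v : Fin m ⊕ (Fin (s - 1) ⊕ Fin t),
      (∑ w, extDMat F q Dh wm (s' := s - 1) (t' := t) u w *
          extLMat F q s t Lh wm (s' := s - 1) (t' := t) w v)
        + (if u = v then 1 else 0) = extXVec F q s t xh wm v := by
  -- basic facts about `H`
  have hDL' : ∀ i j, ∑ k, Dh i k * Lh k j = xh j - (if i = j then 1 else 0) := by
    intro i j
    have h := congrFun (congrFun hDL i) j
    simp only [Matrix.add_apply, Matrix.mul_apply, Matrix.one_apply, Matrix.of_apply] at h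
    linear_combination h
  have hsym' : ∀ i j, Dh i j = Dh j i := fun i j => (hsymm.apply j i)
  have hcol' : ∀ (c : F) (j : Fin m), ∑ k, c * Lh k j = c * ((1 - q) * xh j) := by
    intro c j; rw [← Finset.mul_sum, hcol j]
  have hDLwm' : ∀ (c : F) (j : Fin m),
      ∑ k, c * (Dh k wm * Lh k j) = c * (xh j - (if j = wm then 1 else 0)) := by
    intro c j
    have h : ∀ k : Fin m, c * (Dh k wm * Lh k j) = c * (Dh wm k * Lh k j) := by
      intro k; rw [hsym' k wm]
    rw [Finset.sum_congr rfl fun k _ => h k, ← Finset.mul_sum, hDL' wm j]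
    have : (if wm = j then (1:F) else 0) = (if j = wm then 1 else 0) := by
      by_cases h : j = wm
      · simp [h]
      · rw [if_neg h, if_neg fun hh => h hh.symm]
    rw [this]
  have hsF : ((s - 1 : ℕ) : F) = (s : F) - 1 := by
    have h : ((s - 1 : ℕ) : F) = ((s:ℕ) : F) - ((1:ℕ):F) := Nat.cast_sub hs
    simpa using h
  -- the scalar identities
  have hΔ2 : ((s:F) - 1) * q ^ 2 * ((t:F) - 1) - 1 ≠ 0 := by
    convert hΔ using 2; ring
  have hΔ3 : q ^ 2 * ((t:F) - 1) * ((s:F) - 1) - 1 ≠ 0 := by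
    convert hΔ using 2; ring
  have hE6 : (q + 1) * (1 / (q + 1)) = 1 := by field_simp
  have hE1 : ((s:F) - 1) * q ^ 2 * (-q ^ 2 * ((t:F) - 1) / ((q + 1) * (q ^ 2 * ((s : F) - 1) * ((t : F) - 1) - 1)))
      + (t:F) * q * (q / ((q + 1) * (q ^ 2 * ((s : F) - 1) * ((t : F) - 1) - 1)))
      = q ^ 2 / (q + 1) * (((t:F) - 1) / (q ^ 2 * ((s : F) - 1) * ((t : F) - 1) - 1) - 1) := by
    field_simp
    ring
  have hE2 : ((s:F) - 1) * (q + 1) * (-q ^ 2 * ((t:F) - 1) / ((q + 1) * (q ^ 2 * ((s : F) - 1) * ((t : F) - 1) - 1)))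
      + (t:F) * (q / ((q + 1) * (q ^ 2 * ((s : F) - 1) * ((t : F) - 1) - 1)))
      = (q * ((t : F) - 1) - 1) / ((q + 1) * (q ^ 2 * ((s : F) - 1) * ((t : F) - 1) - 1)) - 1 := by
    field_simp
    ring
  have hE3 : (q + 1) * (q ^ 2 / (q + 1) * (((t:F) - 1) / (q ^ 2 * ((s : F) - 1) * ((t : F) - 1) - 1) - 1))
      + (q + 1) * (-q ^ 2 * ((t:F) - 1) / ((q + 1) * (q ^ 2 * ((s : F) - 1) * ((t : F) - 1) - 1)))
      = -q ^ 2 := by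
    field_simp
    ring
  have hE4 : -q - (q ^ 2 / (q + 1) * (((t:F) - 1) / (q ^ 2 * ((s : F) - 1) * ((t : F) - 1) - 1) - 1))
      + ((s:F) - 1) * (-q ^ 2 * ((t:F) - 1) / ((q + 1) * (q ^ 2 * ((s : F) - 1) * ((t : F) - 1) - 1)))
      + ((t:F) - 1) * (q + 1) * (q / ((q + 1) * (q ^ 2 * ((s : F) - 1) * ((t : F) - 1) - 1)))
      = (q * ((t : F) - 1) - 1) / ((q + 1) * (q ^ 2 * ((s : F) - 1) * ((t : F) - 1) - 1)) - 1 := by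
    field_simp
    ring
  have hE5 : (1 + ((s:F) - 1) * q ^ 2) * (-q ^ 2 * ((t:F) - 1) / ((q + 1) * (q ^ 2 * ((s : F) - 1) * ((t : F) - 1) - 1)))
      + q ^ 2 * (1 / (q + 1))
      + (t:F) * q * (q / ((q + 1) * (q ^ 2 * ((s : F) - 1) * ((t : F) - 1) - 1)))
      = 0 := by
    field_simp
    ring
  have hE7 : (((s:F) - 1) + 1) * (-q ^ 2 * ((t:F) - 1) / ((q + 1) * (q ^ 2 * ((s : F) - 1) * ((t : F) - 1) - 1)))
      + 1 / (q + 1)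
      + ((t:F) - 1) * (q + 1) * (q / ((q + 1) * (q ^ 2 * ((s : F) - 1) * ((t : F) - 1) - 1)))
      = (q * ((t : F) - 1) - 1) / ((q + 1) * (q ^ 2 * ((s : F) - 1) * ((t : F) - 1) - 1)) := by
    field_simp
    ring
  have hE8 : (1 + ((s:F) - 1) * q ^ 2) * (q / ((q + 1) * (q ^ 2 * ((s : F) - 1) * ((t : F) - 1) - 1)))
      + (t:F) * q * (-q ^ 2 * ((s:F) - 1) / ((q + 1) * (q ^ 2 * ((s : F) - 1) * ((t : F) - 1) - 1)))
      + q * (1 / (q + 1))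
      = 0 := by
    field_simp
    ring
  have hE9 : ((s:F) - 1) * (q + 1) * (q / ((q + 1) * (q ^ 2 * ((s : F) - 1) * ((t : F) - 1) - 1)))
      + (t:F) * (-q ^ 2 * ((s:F) - 1) / ((q + 1) * (q ^ 2 * ((s : F) - 1) * ((t : F) - 1) - 1)))
      + 1 / (q + 1)
      = (q * ((s : F) - 1) - 1) / ((q + 1) * (q ^ 2 * ((s : F) - 1) * ((t : F) - 1) - 1)) := by
    field_simp
    ring
  have hE10 : (((s:F) - 1) + 1) * (q / ((q + 1) * (q ^ 2 * ((s : F) - 1) * ((t : F) - 1) - 1)))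
      + ((t:F) - 1) * (q + 1) * (-q ^ 2 * ((s:F) - 1) / ((q + 1) * (q ^ 2 * ((s : F) - 1) * ((t : F) - 1) - 1)))
      = (q * ((s : F) - 1) - 1) / ((q + 1) * (q ^ 2 * ((s : F) - 1) * ((t : F) - 1) - 1)) - 1 := by
    field_simp
    ring
  intro u v
  rw [Fintype.sum_sum_type, Fintype.sum_sum_type]
  rcases u with i | a | c0 <;> rcases v with j | b | c
  · by_cases hj : j = wm
    · simp only [hj, extDMat, extLMat, extXVec, Matrix.of_apply, Sum.inl.injEq, Sum.inr.injEq,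
      reduceCtorEq, hdiag, aux_ite_sub, aux_ite_zero_flip, mul_add, add_mul, mul_sub, sub_mul,
      mul_ite, ite_mul, mul_zero, zero_mul, mul_one, one_mul, add_zero, zero_add, mul_assoc,
      Finset.sum_add_distrib, Finset.sum_sub_distrib, Finset.sum_const, Finset.sum_const_zero,
      Finset.card_univ, Fintype.card_fin, nsmul_eq_mul, Finset.sum_ite_eq, Finset.sum_ite_eq',
      Finset.mem_univ, if_true, eq_self_iff_true, and_true, true_and, and_false, false_and,
      if_false, hsF, hDL', hDLwm', hcol, hcol']
      linear_combination Dh i wm * hE1 + hE2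
    · simp only [hj, extDMat, extLMat, extXVec, Matrix.of_apply, Sum.inl.injEq, Sum.inr.injEq,
      reduceCtorEq, hdiag, aux_ite_sub, aux_ite_zero_flip, mul_add, add_mul, mul_sub, sub_mul,
      mul_ite, ite_mul, mul_zero, zero_mul, mul_one, one_mul, add_zero, zero_add, mul_assoc,
      Finset.sum_add_distrib, Finset.sum_sub_distrib, Finset.sum_const, Finset.sum_const_zero,
      Finset.card_univ, Fintype.card_fin, nsmul_eq_mul, Finset.sum_ite_eq, Finset.sum_ite_eq',
      Finset.mem_univ, if_true, eq_self_iff_true, and_true, true_and, and_false, false_and,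
      if_false, hsF, hDL', hDLwm', hcol, hcol']
      ring
  · simp only [extDMat, extLMat, extXVec, Matrix.of_apply, Sum.inl.injEq, Sum.inr.injEq,
      reduceCtorEq, hdiag, aux_ite_sub, aux_ite_zero_flip, mul_add, add_mul, mul_sub, sub_mul,
      mul_ite, ite_mul, mul_zero, zero_mul, mul_one, one_mul, add_zero, zero_add, mul_assoc,
      Finset.sum_add_distrib, Finset.sum_sub_distrib, Finset.sum_const, Finset.sum_const_zero,
      Finset.card_univ, Fintype.card_fin, nsmul_eq_mul, Finset.sum_ite_eq, Finset.sum_ite_eq',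
      Finset.mem_univ, if_true, eq_self_iff_true, and_true, true_and, and_false, false_and,
      if_false, hsF, hDL', hDLwm', hcol, hcol']
    linear_combination Dh i wm * hE5 + hE2 + hE6
  · simp only [extDMat, extLMat, extXVec, Matrix.of_apply, Sum.inl.injEq, Sum.inr.injEq,
      reduceCtorEq, hdiag, aux_ite_sub, aux_ite_zero_flip, mul_add, add_mul, mul_sub, sub_mul,
      mul_ite, ite_mul, mul_zero, zero_mul, mul_one, one_mul, add_zero, zero_add, mul_assoc,
      Finset.sum_add_distrib, Finset.sum_sub_distrib, Finset.sum_const, Finset.sum_const_zero,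
      Finset.card_univ, Fintype.card_fin, nsmul_eq_mul, Finset.sum_ite_eq, Finset.sum_ite_eq',
      Finset.mem_univ, if_true, eq_self_iff_true, and_true, true_and, and_false, false_and,
      if_false, hsF, hDL', hDLwm', hcol, hcol']
    linear_combination Dh i wm * hE8 + hE9
  · by_cases hj : j = wm
    · simp only [hj, extDMat, extLMat, extXVec, Matrix.of_apply, Sum.inl.injEq, Sum.inr.injEq,
      reduceCtorEq, hdiag, aux_ite_sub, aux_ite_zero_flip, mul_add, add_mul, mul_sub, sub_mul,
      mul_ite, ite_mul, mul_zero, zero_mul, mul_one, one_mul, add_zero, zero_add, mul_assoc,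
      Finset.sum_add_distrib, Finset.sum_sub_distrib, Finset.sum_const, Finset.sum_const_zero,
      Finset.card_univ, Fintype.card_fin, nsmul_eq_mul, Finset.sum_ite_eq, Finset.sum_ite_eq',
      Finset.mem_univ, if_true, eq_self_iff_true, and_true, true_and, and_false, false_and,
      if_false, hsF, hDL', hDLwm', hcol, hcol']
      linear_combination hE2 - hE3
    · simp only [hj, extDMat, extLMat, extXVec, Matrix.of_apply, Sum.inl.injEq, Sum.inr.injEq,
      reduceCtorEq, hdiag, aux_ite_sub, aux_ite_zero_flip, mul_add, add_mul, mul_sub, sub_mul,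
      mul_ite, ite_mul, mul_zero, zero_mul, mul_one, one_mul, add_zero, zero_add, mul_assoc,
      Finset.sum_add_distrib, Finset.sum_sub_distrib, Finset.sum_const, Finset.sum_const_zero,
      Finset.card_univ, Fintype.card_fin, nsmul_eq_mul, Finset.sum_ite_eq, Finset.sum_ite_eq',
      Finset.mem_univ, if_true, eq_self_iff_true, and_true, true_and, and_false, false_and,
      if_false, hsF, hDL', hDLwm', hcol, hcol']
      ring
  · by_cases hab : a = b
    · simp only [hab, extDMat, extLMat, extXVec, Matrix.of_apply, Sum.inl.injEq, Sum.inr.injEq,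
      reduceCtorEq, hdiag, aux_ite_sub, aux_ite_zero_flip, mul_add, add_mul, mul_sub, sub_mul,
      mul_ite, ite_mul, mul_zero, zero_mul, mul_one, one_mul, add_zero, zero_add, mul_assoc,
      Finset.sum_add_distrib, Finset.sum_sub_distrib, Finset.sum_const, Finset.sum_const_zero,
      Finset.card_univ, Fintype.card_fin, nsmul_eq_mul, Finset.sum_ite_eq, Finset.sum_ite_eq',
      Finset.mem_univ, if_true, eq_self_iff_true, and_true, true_and, and_false, false_and,
      if_false, hsF, hDL', hDLwm', hcol, hcol']
      linear_combination hE2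
    · simp only [hab, extDMat, extLMat, extXVec, Matrix.of_apply, Sum.inl.injEq, Sum.inr.injEq,
      reduceCtorEq, hdiag, aux_ite_sub, aux_ite_zero_flip, mul_add, add_mul, mul_sub, sub_mul,
      mul_ite, ite_mul, mul_zero, zero_mul, mul_one, one_mul, add_zero, zero_add, mul_assoc,
      Finset.sum_add_distrib, Finset.sum_sub_distrib, Finset.sum_const, Finset.sum_const_zero,
      Finset.card_univ, Fintype.card_fin, nsmul_eq_mul, Finset.sum_ite_eq, Finset.sum_ite_eq',
      Finset.mem_univ, if_true, eq_self_iff_true, and_true, true_and, and_false, false_and,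
      if_false, hsF, hDL', hDLwm', hcol, hcol']
      linear_combination hE2 + hE6
  · simp only [extDMat, extLMat, extXVec, Matrix.of_apply, Sum.inl.injEq, Sum.inr.injEq,
      reduceCtorEq, hdiag, aux_ite_sub, aux_ite_zero_flip, mul_add, add_mul, mul_sub, sub_mul,
      mul_ite, ite_mul, mul_zero, zero_mul, mul_one, one_mul, add_zero, zero_add, mul_assoc,
      Finset.sum_add_distrib, Finset.sum_sub_distrib, Finset.sum_const, Finset.sum_const_zero,
      Finset.card_univ, Fintype.card_fin, nsmul_eq_mul, Finset.sum_ite_eq, Finset.sum_ite_eq',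
      Finset.mem_univ, if_true, eq_self_iff_true, and_true, true_and, and_false, false_and,
      if_false, hsF, hDL', hDLwm', hcol, hcol']
    linear_combination hE9
  · by_cases hj : j = wm
    · simp only [hj, extDMat, extLMat, extXVec, Matrix.of_apply, Sum.inl.injEq, Sum.inr.injEq,
      reduceCtorEq, hdiag, aux_ite_sub, aux_ite_zero_flip, mul_add, add_mul, mul_sub, sub_mul,
      mul_ite, ite_mul, mul_zero, zero_mul, mul_one, one_mul, add_zero, zero_add, mul_assoc,
      Finset.sum_add_distrib, Finset.sum_sub_distrib, Finset.sum_const, Finset.sum_const_zero,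
      Finset.card_univ, Fintype.card_fin, nsmul_eq_mul, Finset.sum_ite_eq, Finset.sum_ite_eq',
      Finset.mem_univ, if_true, eq_self_iff_true, and_true, true_and, and_false, false_and,
      if_false, hsF, hDL', hDLwm', hcol, hcol']
      linear_combination hE4
    · simp only [hj, extDMat, extLMat, extXVec, Matrix.of_apply, Sum.inl.injEq, Sum.inr.injEq,
      reduceCtorEq, hdiag, aux_ite_sub, aux_ite_zero_flip, mul_add, add_mul, mul_sub, sub_mul,
      mul_ite, ite_mul, mul_zero, zero_mul, mul_one, one_mul, add_zero, zero_add, mul_assoc,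
      Finset.sum_add_distrib, Finset.sum_sub_distrib, Finset.sum_const, Finset.sum_const_zero,
      Finset.card_univ, Fintype.card_fin, nsmul_eq_mul, Finset.sum_ite_eq, Finset.sum_ite_eq',
      Finset.mem_univ, if_true, eq_self_iff_true, and_true, true_and, and_false, false_and,
      if_false, hsF, hDL', hDLwm', hcol, hcol']
      ring
  · simp only [extDMat, extLMat, extXVec, Matrix.of_apply, Sum.inl.injEq, Sum.inr.injEq,
      reduceCtorEq, hdiag, aux_ite_sub, aux_ite_zero_flip, mul_add, add_mul, mul_sub, sub_mul,
      mul_ite, ite_mul, mul_zero, zero_mul, mul_one, one_mul, add_zero, zero_add, mul_assoc,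
      Finset.sum_add_distrib, Finset.sum_sub_distrib, Finset.sum_const, Finset.sum_const_zero,
      Finset.card_univ, Fintype.card_fin, nsmul_eq_mul, Finset.sum_ite_eq, Finset.sum_ite_eq',
      Finset.mem_univ, if_true, eq_self_iff_true, and_true, true_and, and_false, false_and,
      if_false, hsF, hDL', hDLwm', hcol, hcol']
    linear_combination hE7
  · by_cases hcc : c0 = c
    · simp only [hcc, extDMat, extLMat, extXVec, Matrix.of_apply, Sum.inl.injEq, Sum.inr.injEq,
      reduceCtorEq, hdiag, aux_ite_sub, aux_ite_zero_flip, mul_add, add_mul, mul_sub, sub_mul,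
      mul_ite, ite_mul, mul_zero, zero_mul, mul_one, one_mul, add_zero, zero_add, mul_assoc,
      Finset.sum_add_distrib, Finset.sum_sub_distrib, Finset.sum_const, Finset.sum_const_zero,
      Finset.card_univ, Fintype.card_fin, nsmul_eq_mul, Finset.sum_ite_eq, Finset.sum_ite_eq',
      Finset.mem_univ, if_true, eq_self_iff_true, and_true, true_and, and_false, false_and,
      if_false, hsF, hDL', hDLwm', hcol, hcol']
      linear_combination hE10
    · simp only [hcc, extDMat, extLMat, extXVec, Matrix.of_apply, Sum.inl.injEq, Sum.inr.injEq,
      reduceCtorEq, hdiag, aux_ite_sub, aux_ite_zero_flip, mul_add, add_mul, mul_sub, sub_mul,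
      mul_ite, ite_mul, mul_zero, zero_mul, mul_one, one_mul, add_zero, zero_add, mul_assoc,
      Finset.sum_add_distrib, Finset.sum_sub_distrib, Finset.sum_const, Finset.sum_const_zero,
      Finset.card_univ, Fintype.card_fin, nsmul_eq_mul, Finset.sum_ite_eq, Finset.sum_ite_eq',
      Finset.mem_univ, if_true, eq_self_iff_true, and_true, true_and, and_false, false_and,
      if_false, hsF, hDL', hDLwm', hcol, hcol']
      linear_combination hE10 + hE6
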